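/- Let f ∈ C¹((0,∞)) be positive and satisfy (1+m) f(t) ≤ t f'(t) ≤ (1+M) f(t) for all t > 0, with 0 < m ≤ M < ∞. Define F(t) = ∫₀^t f(s) ds and φ(t) = ∫_t^∞ ds/√(F(s)) (which is finite for all t > 0). Then there exist constants c₁, c₂ > 0 such that c₁ √(t/f(t)) ≤ φ(t) ≤ c₂ √(t/f(t)) for all t > 0. -/

import Mathlib

open Set MeasureTheory

private lemma rpow_cancel {s : ℝ} (hs : 0 < s) (p : ℝ) : s ^ (-p) * s ^ p = 1 := by
  rw [← Real.rpow_add hs]; simp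

private lemma key_rpow_eq {a b c : ℝ} (ha : 0 < a) (hb : 0 < b) (hc : 0 < c) (p q : ℝ) :
    (a ^ p * b ^ q / c) ^ (-(1:ℝ)/2) = a ^ (-p/2) * b ^ (-q/2) * c ^ ((1:ℝ)/2) := by
  have h1 : (a ^ p * b ^ q / c) ^ (-(1:ℝ)/2)
      = (a ^ p) ^ (-(1:ℝ)/2) * (b ^ q) ^ (-(1:ℝ)/2) / c ^ (-(1:ℝ)/2) := by
    rw [Real.div_rpow (by positivity) hc.le,
        Real.mul_rpow (by positivity) (by positivity)]
  rw [h1, ← Real.rpow_mul ha.le, ← Real.rpow_mul hb.le,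
      show p * (-(1:ℝ)/2) = -p/2 by ring, show q * (-(1:ℝ)/2) = -q/2 by ring,
      div_eq_mul_inv, ← Real.rpow_neg hc.le, show -(-(1:ℝ)/2) = (1:ℝ)/2 by ring]

theorem varphi_comparable_sqrt (f : ℝ → ℝ) (m M : ℝ) (hm : 0 < m) (hmM : m ≤ M)
    (hf : ContDiffOn ℝ 1 f (Set.Ioi 0)) (hfpos : ∀ t > (0:ℝ), 0 < f t)
    (hFcond : ∀ t > (0:ℝ), (1 + m) * f t ≤ t * deriv f t ∧ t * deriv f t ≤ (1 + M) * f t)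
    (F φ : ℝ → ℝ)
    (hFdef : ∀ t > (0:ℝ), F t = ∫ s in (0:ℝ)..t, f s)
    (hφfin : ∀ t > (0:ℝ), MeasureTheory.IntegrableOn (fun s => (F s) ^ (-(1:ℝ)/2)) (Set.Ioi t))
    (hφdef : ∀ t > (0:ℝ), φ t = ∫ s in Set.Ioi t, (F s) ^ (-(1:ℝ)/2)) :
    ∃ c₁ > (0:ℝ), ∃ c₂ > (0:ℝ), ∀ t > (0:ℝ),
      c₁ * Real.sqrt (t / f t) ≤ φ t ∧ φ t ≤ c₂ * Real.sqrt (t / f t) := by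
  have hM : 0 < M := lt_of_lt_of_le hm hmM
  have h2m : (0:ℝ) < 2 + m := by linarith
  have h2M : (0:ℝ) < 2 + M := by linarith
  have hfd : ∀ x ∈ Set.Ioi (0:ℝ), DifferentiableAt ℝ f x := fun x hx =>
    (hf.differentiableOn one_ne_zero).differentiableAt (isOpen_Ioi.mem_nhds hx)
  -- derivative of f s * s ^ (-p)
  have hD : ∀ p : ℝ, ∀ x ∈ Set.Ioi (0:ℝ), HasDerivAt (fun s => f s * s ^ (-p))
      (deriv f x * x ^ (-p) + f x * (-p * x ^ (-p - 1))) x := by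
    intro p x hx
    exact ((hfd x hx).hasDerivAt).mul (Real.hasDerivAt_rpow_const (Or.inl (ne_of_gt hx)))
  -- f s * s^(-(1+m)) is monotone on Ioi 0
  have hgm : MonotoneOn (fun s => f s * s ^ (-(1+m))) (Set.Ioi (0:ℝ)) := by
    apply monotoneOn_of_deriv_nonneg (convex_Ioi 0)
    · exact fun x hx => (hD (1+m) x hx).continuousAt.continuousWithinAt
    · intro x hx
      rw [interior_Ioi] at hx
      exact (hD (1+m) x hx).differentiableAt.differentiableWithinAt
    · intro x hx
      rw [interior_Ioi] at hx
      rw [(hD (1+m) x hx).deriv]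
      have hxpow : x ^ (-(1+m)) = x * x ^ (-(1+m) - 1) := by
        have h := Real.rpow_add hx 1 (-(1+m) - 1)
        rw [Real.rpow_one] at h
        rw [← h]; congr 1; ring
      have h1 := (hFcond x hx).1
      have ha : (0:ℝ) ≤ x ^ (-(1+m) - 1) := Real.rpow_nonneg (le_of_lt hx) _
      rw [hxpow]
      nlinarith [mul_nonneg ha (sub_nonneg.mpr h1)]
  -- f s * s^(-(1+M)) is antitone on Ioi 0
  have hgM : AntitoneOn (fun s => f s * s ^ (-(1+M))) (Set.Ioi (0:ℝ)) := by
    apply antitoneOn_of_deriv_nonpos (convex_Ioi 0)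
    · exact fun x hx => (hD (1+M) x hx).continuousAt.continuousWithinAt
    · intro x hx
      rw [interior_Ioi] at hx
      exact (hD (1+M) x hx).differentiableAt.differentiableWithinAt
    · intro x hx
      rw [interior_Ioi] at hx
      rw [(hD (1+M) x hx).deriv]
      have hxpow : x ^ (-(1+M)) = x * x ^ (-(1+M) - 1) := by
        have h := Real.rpow_add hx 1 (-(1+M) - 1)
        rw [Real.rpow_one] at h
        rw [← h]; congr 1; ring
      have h1 := (hFcond x hx).2
      have ha : (0:ℝ) ≤ x ^ (-(1+M) - 1) := Real.rpow_nonneg (le_of_lt hx) _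
      rw [hxpow]
      nlinarith [mul_nonneg ha (sub_nonneg.mpr h1)]
  -- the four pointwise comparison bounds
  have bound_i : ∀ t > (0:ℝ), ∀ s, 0 < s → s ≤ t →
      f s ≤ f t * t ^ (-(1+m)) * s ^ (1+m) := by
    intro t ht s hs hst
    calc f s = f s * s ^ (-(1+m)) * s ^ (1+m) := by
          rw [mul_assoc, rpow_cancel hs, mul_one]
      _ ≤ f t * t ^ (-(1+m)) * s ^ (1+m) :=
          mul_le_mul_of_nonneg_right (hgm hs (lt_of_lt_of_le hs hst) hst)
            (Real.rpow_nonneg hs.le _)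
  have bound_ii : ∀ t > (0:ℝ), ∀ s, 0 < s → s ≤ t →
      f t * t ^ (-(1+M)) * s ^ (1+M) ≤ f s := by
    intro t ht s hs hst
    calc f t * t ^ (-(1+M)) * s ^ (1+M)
        ≤ f s * s ^ (-(1+M)) * s ^ (1+M) :=
          mul_le_mul_of_nonneg_right (hgM hs (lt_of_lt_of_le hs hst) hst)
            (Real.rpow_nonneg hs.le _)
      _ = f s := by rw [mul_assoc, rpow_cancel hs, mul_one]
  have bound_iii : ∀ t > (0:ℝ), ∀ s, t ≤ s →
      f t * t ^ (-(1+m)) * s ^ (1+m) ≤ f s := by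
    intro t ht s hst
    have hs : (0:ℝ) < s := lt_of_lt_of_le ht hst
    calc f t * t ^ (-(1+m)) * s ^ (1+m)
        ≤ f s * s ^ (-(1+m)) * s ^ (1+m) :=
          mul_le_mul_of_nonneg_right (hgm ht hs hst) (Real.rpow_nonneg hs.le _)
      _ = f s := by rw [mul_assoc, rpow_cancel hs, mul_one]
  have bound_iv : ∀ t > (0:ℝ), ∀ s, t ≤ s →
      f s ≤ f t * t ^ (-(1+M)) * s ^ (1+M) := by
    intro t ht s hst
    have hs : (0:ℝ) < s := lt_of_lt_of_le ht hst
    calc f s = f s * s ^ (-(1+M)) * s ^ (1+M) := by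
          rw [mul_assoc, rpow_cancel hs, mul_one]
      _ ≤ f t * t ^ (-(1+M)) * s ^ (1+M) :=
          mul_le_mul_of_nonneg_right (hgM ht hs hst) (Real.rpow_nonneg hs.le _)
  -- integrability of f on (0, t]
  have hintf : ∀ t > (0:ℝ), IntegrableOn f (Set.Ioc 0 t) := by
    intro t ht
    have hmeas : AEStronglyMeasurable f (volume.restrict (Set.Ioc 0 t)) :=
      (hf.continuousOn.mono Ioc_subset_Ioi_self).aestronglyMeasurable measurableSet_Ioc
    refine Integrable.mono' (g := fun _ => f t) ?_ hmeas ?_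
    · exact integrableOn_const measure_Ioc_lt_top.ne
    · filter_upwards [ae_restrict_mem measurableSet_Ioc] with s hs
      have hs0 : (0:ℝ) < s := hs.1
      have h1 : f s ≤ f t * t ^ (-(1+m)) * s ^ (1+m) := bound_i t ht s hs0 hs.2
      have h2 : s ^ ((1:ℝ)+m) ≤ t ^ ((1:ℝ)+m) := Real.rpow_le_rpow hs0.le hs.2 (by linarith)
      have h3 : f t * t ^ (-(1+m)) * s ^ (1+m) ≤ f t := by
        calc f t * t ^ (-(1+m)) * s ^ (1+m) ≤ f t * t ^ (-(1+m)) * t ^ (1+m) := by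
              apply mul_le_mul_of_nonneg_left h2
              have := hfpos t ht
              positivity
          _ = f t := by rw [mul_assoc, rpow_cancel ht, mul_one]
      rw [Real.norm_eq_abs, abs_of_pos (hfpos s hs0)]
      linarith
  -- value of ∫ s in Ioc 0 t, s ^ p
  have hrint : ∀ t > (0:ℝ), ∀ p : ℝ, 0 < p →
      ∫ s in Set.Ioc (0:ℝ) t, s ^ p = t ^ (p+1) / (p+1) := by
    intro t ht p hp
    rw [← intervalIntegral.integral_of_le ht.le,
        integral_rpow (Or.inl (by linarith)), Real.zero_rpow (by linarith), sub_zero]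
  -- the F bounds
  have hFub : ∀ t > (0:ℝ), F t ≤ t * f t / (2 + m) := by
    intro t ht
    rw [hFdef t ht, intervalIntegral.integral_of_le ht.le]
    have hint2 : IntegrableOn (fun s => f t * t ^ (-(1+m)) * s ^ ((1:ℝ)+m)) (Set.Ioc 0 t) :=
      ((intervalIntegral.intervalIntegrable_rpow' (by linarith)).const_mul (f t * t ^ (-(1+m)))).1
    have step : ∫ s in Set.Ioc (0:ℝ) t, f s
        ≤ ∫ s in Set.Ioc (0:ℝ) t, f t * t ^ (-(1+m)) * s ^ ((1:ℝ)+m) :=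
      setIntegral_mono_on (hintf t ht) hint2 measurableSet_Ioc
        (fun s hs => bound_i t ht s hs.1 hs.2)
    have val : ∫ s in Set.Ioc (0:ℝ) t, f t * t ^ (-(1+m)) * s ^ ((1:ℝ)+m)
        = f t * t ^ (-(1+m)) * (t ^ ((1:ℝ)+m+1) / ((1:ℝ)+m+1)) := by
      rw [integral_const_mul, hrint t ht _ (by linarith)]
    have tcan : t ^ (-(1+m)) * t ^ ((1:ℝ)+m+1) = t := by
      rw [← Real.rpow_add ht, show (-(1+m)) + ((1:ℝ)+m+1) = (1:ℝ) by ring, Real.rpow_one]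
    have : f t * t ^ (-(1+m)) * (t ^ ((1:ℝ)+m+1) / ((1:ℝ)+m+1)) = t * f t / (2+m) := by
      rw [mul_assoc, mul_div_assoc]
      rw [show ((1:ℝ)+m+1) = 2+m by ring] at tcan ⊢
      rw [← mul_div_assoc, tcan]
      ring
    linarith [step, val.le, val.ge]
  have hFlb : ∀ t > (0:ℝ), t * f t / (2 + M) ≤ F t := by
    intro t ht
    rw [hFdef t ht, intervalIntegral.integral_of_le ht.le]
    have hint2 : IntegrableOn (fun s => f t * t ^ (-(1+M)) * s ^ ((1:ℝ)+M)) (Set.Ioc 0 t) :=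
      ((intervalIntegral.intervalIntegrable_rpow' (by linarith)).const_mul (f t * t ^ (-(1+M)))).1
    have step : ∫ s in Set.Ioc (0:ℝ) t, f t * t ^ (-(1+M)) * s ^ ((1:ℝ)+M)
        ≤ ∫ s in Set.Ioc (0:ℝ) t, f s :=
      setIntegral_mono_on hint2 (hintf t ht) measurableSet_Ioc
        (fun s hs => bound_ii t ht s hs.1 hs.2)
    have val : ∫ s in Set.Ioc (0:ℝ) t, f t * t ^ (-(1+M)) * s ^ ((1:ℝ)+M)
        = f t * t ^ (-(1+M)) * (t ^ ((1:ℝ)+M+1) / ((1:ℝ)+M+1)) := by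
      rw [integral_const_mul, hrint t ht _ (by linarith)]
    have tcan : t ^ (-(1+M)) * t ^ ((1:ℝ)+M+1) = t := by
      rw [← Real.rpow_add ht, show (-(1+M)) + ((1:ℝ)+M+1) = (1:ℝ) by ring, Real.rpow_one]
    have : f t * t ^ (-(1+M)) * (t ^ ((1:ℝ)+M+1) / ((1:ℝ)+M+1)) = t * f t / (2+M) := by
      rw [mul_assoc, mul_div_assoc]
      rw [show ((1:ℝ)+M+1) = 2+M by ring] at tcan ⊢
      rw [← mul_div_assoc, tcan]
      ring
    linarith [step, val.le, val.ge]
  have hFpos : ∀ s > (0:ℝ), 0 < F s := by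
    intro s hs
    have := hFlb s hs
    have h0 : 0 < s * f s / (2+M) := by
      have := hfpos s hs; positivity
    linarith
  -- sqrt as rpow
  have hsqrt : ∀ t > (0:ℝ), Real.sqrt (t / f t) = t ^ ((1:ℝ)/2) * (f t) ^ (-(1:ℝ)/2) := by
    intro t ht
    have hft := hfpos t ht
    rw [Real.sqrt_eq_rpow, Real.div_rpow ht.le hft.le, div_eq_mul_inv,
        ← Real.rpow_neg hft.le, show -((1:ℝ)/2) = -(1:ℝ)/2 by ring]
  refine ⟨2 * (2+m) ^ ((1:ℝ)/2) / M, by positivity, 2 * (2+M) ^ ((1:ℝ)/2) / m, by positivity,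
    fun t ht => ?_⟩
  have hft := hfpos t ht
  constructor
  · -- lower bound
    set K : ℝ := f t * t ^ (-(1+M)) / (2+m) with hKdef
    have hK : 0 < K := by positivity
    set a : ℝ := (2+M) * (-(1:ℝ)/2) with hadef
    have ha : a < -1 := by rw [hadef]; nlinarith
    have hpt : ∀ s ∈ Set.Ioi t, K ^ (-(1:ℝ)/2) * s ^ a ≤ (F s) ^ (-(1:ℝ)/2) := by
      intro s hs
      have hst : t ≤ s := le_of_lt hs
      have hs0 : (0:ℝ) < s := lt_of_lt_of_le ht hst
      have hFs : F s ≤ K * s ^ ((2:ℝ)+M) := by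
        have h1 : F s ≤ s * f s / (2+m) := hFub s hs0
        have h2 : f s ≤ f t * t ^ (-(1+M)) * s ^ (1+M) := bound_iv t ht s hst
        have h3 : s * f s / (2+m) ≤ s * (f t * t ^ (-(1+M)) * s ^ (1+M)) / (2+m) := by
          gcongr
        have hss : s * s ^ ((1:ℝ)+M) = s ^ ((2:ℝ)+M) := by
          have h := Real.rpow_add hs0 1 (1+M)
          rw [Real.rpow_one] at h
          rw [← h]; congr 1; ring
        have h4 : s * (f t * t ^ (-(1+M)) * s ^ (1+M)) / (2+m) = K * s ^ ((2:ℝ)+M) := by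
          rw [hKdef, ← hss]; ring
        linarith [h3, h4.le, h4.ge]
      have h5 : (K * s ^ ((2:ℝ)+M)) ^ (-(1:ℝ)/2) ≤ (F s) ^ (-(1:ℝ)/2) :=
        Real.rpow_le_rpow_of_nonpos (hFpos s hs0) hFs (by norm_num)
      have h6 : (K * s ^ ((2:ℝ)+M)) ^ (-(1:ℝ)/2) = K ^ (-(1:ℝ)/2) * s ^ a := by
        rw [Real.mul_rpow hK.le (Real.rpow_nonneg hs0.le _), ← Real.rpow_mul hs0.le, hadef]
      linarith [h5, h6.le, h6.ge]
    have hint1 : IntegrableOn (fun s : ℝ => K ^ (-(1:ℝ)/2) * s ^ a) (Set.Ioi t) :=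
      (integrableOn_Ioi_rpow_of_lt ha ht).const_mul _
    have step : ∫ s in Set.Ioi t, K ^ (-(1:ℝ)/2) * s ^ a
        ≤ ∫ s in Set.Ioi t, (F s) ^ (-(1:ℝ)/2) :=
      setIntegral_mono_on hint1 (hφfin t ht) measurableSet_Ioi hpt
    have val : ∫ s in Set.Ioi t, K ^ (-(1:ℝ)/2) * s ^ a
        = K ^ (-(1:ℝ)/2) * (-t ^ (a+1) / (a+1)) := by
      rw [integral_const_mul, integral_Ioi_rpow_of_lt ha ht]
    have hKe : K ^ (-(1:ℝ)/2)
        = (f t) ^ (-(1:ℝ)/2) * t ^ ((1+M)/2) * (2+m) ^ ((1:ℝ)/2) := by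
      have : K = (f t) ^ (1:ℝ) * t ^ (-(1+M)) / (2+m) := by rw [Real.rpow_one]
      rw [this, key_rpow_eq hft ht h2m, show -(1:ℝ)/2 = -(1:ℝ)/2 by ring,
          show (-(-(1+M))/2 : ℝ) = (1+M)/2 by ring]
    have harith : K ^ (-(1:ℝ)/2) * (-t ^ (a+1) / (a+1))
        = 2 * (2+m) ^ ((1:ℝ)/2) / M * (t ^ ((1:ℝ)/2) * (f t) ^ (-(1:ℝ)/2)) := by
      rw [hKe, hadef, show ((2+M) * (-(1:ℝ)/2) + 1) = -(M/2) by ring]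
      have tprod : t ^ ((1+M)/2) * t ^ (-(M/2)) = t ^ ((1:ℝ)/2) := by
        rw [← Real.rpow_add ht, show ((1+M)/2 + -(M/2) : ℝ) = (1:ℝ)/2 by ring]
      have h7 : -t ^ (-(M/2)) / -(M/2) = 2/M * t ^ (-(M/2)) := by
        field_simp
      rw [h7, ← tprod]
      field_simp
    rw [hφdef t ht, hsqrt t ht]
    linarith [step, val.le, val.ge, harith.le, harith.ge]
  · -- upper bound
    set K : ℝ := f t * t ^ (-(1+m)) / (2+M) with hKdef
    have hK : 0 < K := by positivity
    set a : ℝ := (2+m) * (-(1:ℝ)/2) with hadef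
    have ha : a < -1 := by rw [hadef]; nlinarith
    have hpt : ∀ s ∈ Set.Ioi t, (F s) ^ (-(1:ℝ)/2) ≤ K ^ (-(1:ℝ)/2) * s ^ a := by
      intro s hs
      have hst : t ≤ s := le_of_lt hs
      have hs0 : (0:ℝ) < s := lt_of_lt_of_le ht hst
      have hFs : K * s ^ ((2:ℝ)+m) ≤ F s := by
        have h1 : s * f s / (2+M) ≤ F s := hFlb s hs0
        have h2 : f t * t ^ (-(1+m)) * s ^ (1+m) ≤ f s := bound_iii t ht s hst
        have h3 : s * (f t * t ^ (-(1+m)) * s ^ (1+m)) / (2+M) ≤ s * f s / (2+M) := by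
          gcongr
        have hss : s * s ^ ((1:ℝ)+m) = s ^ ((2:ℝ)+m) := by
          have h := Real.rpow_add hs0 1 (1+m)
          rw [Real.rpow_one] at h
          rw [← h]; congr 1; ring
        have h4 : s * (f t * t ^ (-(1+m)) * s ^ (1+m)) / (2+M) = K * s ^ ((2:ℝ)+m) := by
          rw [hKdef, ← hss]; ring
        linarith [h3, h4.le, h4.ge]
      have h5 : (F s) ^ (-(1:ℝ)/2) ≤ (K * s ^ ((2:ℝ)+m)) ^ (-(1:ℝ)/2) :=
        Real.rpow_le_rpow_of_nonpos (by positivity) hFs (by norm_num)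
      have h6 : (K * s ^ ((2:ℝ)+m)) ^ (-(1:ℝ)/2) = K ^ (-(1:ℝ)/2) * s ^ a := by
        rw [Real.mul_rpow hK.le (Real.rpow_nonneg hs0.le _), ← Real.rpow_mul hs0.le, hadef]
      linarith [h5, h6.le, h6.ge]
    have hint1 : IntegrableOn (fun s : ℝ => K ^ (-(1:ℝ)/2) * s ^ a) (Set.Ioi t) :=
      (integrableOn_Ioi_rpow_of_lt ha ht).const_mul _
    have step : ∫ s in Set.Ioi t, (F s) ^ (-(1:ℝ)/2)
        ≤ ∫ s in Set.Ioi t, K ^ (-(1:ℝ)/2) * s ^ a :=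
      setIntegral_mono_on (hφfin t ht) hint1 measurableSet_Ioi hpt
    have val : ∫ s in Set.Ioi t, K ^ (-(1:ℝ)/2) * s ^ a
        = K ^ (-(1:ℝ)/2) * (-t ^ (a+1) / (a+1)) := by
      rw [integral_const_mul, integral_Ioi_rpow_of_lt ha ht]
    have hKe : K ^ (-(1:ℝ)/2)
        = (f t) ^ (-(1:ℝ)/2) * t ^ ((1+m)/2) * (2+M) ^ ((1:ℝ)/2) := by
      have : K = (f t) ^ (1:ℝ) * t ^ (-(1+m)) / (2+M) := by rw [Real.rpow_one]
      rw [this, key_rpow_eq hft ht h2M, show -(1:ℝ)/2 = -(1:ℝ)/2 by ring,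
          show (-(-(1+m))/2 : ℝ) = (1+m)/2 by ring]
    have harith : K ^ (-(1:ℝ)/2) * (-t ^ (a+1) / (a+1))
        = 2 * (2+M) ^ ((1:ℝ)/2) / m * (t ^ ((1:ℝ)/2) * (f t) ^ (-(1:ℝ)/2)) := by
      rw [hKe, hadef, show ((2+m) * (-(1:ℝ)/2) + 1) = -(m/2) by ring]
      have tprod : t ^ ((1+m)/2) * t ^ (-(m/2)) = t ^ ((1:ℝ)/2) := by
        rw [← Real.rpow_add ht, show ((1+m)/2 + -(m/2) : ℝ) = (1:ℝ)/2 by ring]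
      have h7 : -t ^ (-(m/2)) / -(m/2) = 2/m * t ^ (-(m/2)) := by
        field_simp
      rw [h7, ← tprod]
      field_simp
    rw [hφdef t ht, hsqrt t ht]
    linarith [step, val.le, val.ge, harith.le, harith.ge]
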